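/- Let ρ be a positive semidefinite matrix of rank r with range projection E, let T be the span of Hermitian matrices whose row or column space lies in range(E), and let Δ be Hermitian with decomposition Δ = Δ_T + Δ_T^⊥ (the parts in T and its orthogonal complement). Suppose ‖Δ_T‖₂ ≤ d²‖Δ_T^⊥‖₂ and there exists a Hermitian matrix Y with Tr(YΔ) = 0, ‖P_T(Y) − E‖₂ ≤ 1/(2d²), and ‖P_T^⊥(Y)‖ < 1/2. Then ‖ρ + Δ‖_tr > ‖ρ‖_tr whenever Δ ≠ 0. -/

import Mathlib

open Matrix
open scoped ComplexOrder

noncomputable def opNorm {d : ℕ} (A : Matrix (Fin d) (Fin d) ℂ) : ℝ :=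
  ‖LinearMap.toContinuousLinearMap (Matrix.toEuclideanLin A)‖

noncomputable def frobNorm {d : ℕ} (A : Matrix (Fin d) (Fin d) ℂ) : ℝ :=
  Real.sqrt (∑ i, ∑ j, ‖A i j‖ ^ 2)

/-- The positive semidefinite square root of a positive semidefinite matrix, with the definition
it had in Mathlib before its removal. -/
noncomputable def Matrix.PosSemidef.sqrt {n 𝕜 : Type*} [Fintype n] [DecidableEq n] [RCLike 𝕜]
    {A : Matrix n n 𝕜} (hA : A.PosSemidef) : Matrix n n 𝕜 :=
  hA.1.eigenvectorUnitary.1 * diagonal ((↑) ∘ Real.sqrt ∘ hA.1.eigenvalues) *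
    (star hA.1.eigenvectorUnitary : Matrix n n 𝕜)

noncomputable def traceNorm {d : ℕ} (A : Matrix (Fin d) (Fin d) ℂ) : ℝ :=
  ((Matrix.posSemidef_conjTranspose_mul_self A).sqrt.trace).re

/-- Projection (w.r.t. the trace inner product) onto the subspace `T` determined by the
range projection `E`: `P_T(A) = A - (1-E) A (1-E)`; the complementary projection is
`P_T^⊥(A) = (1-E) A (1-E)`. -/
noncomputable def PT {d : ℕ} (E A : Matrix (Fin d) (Fin d) ℂ) : Matrix (Fin d) (Fin d) ℂ :=
  A - (1 - E) * A * (1 - E)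

noncomputable def PTperp {d : ℕ} (E A : Matrix (Fin d) (Fin d) ℂ) : Matrix (Fin d) (Fin d) ℂ :=
  (1 - E) * A * (1 - E)

open MatrixOrder in
theorem Matrix.PosSemidef.eq_sqrt_of_sq_eq {n 𝕜 : Type*} [Fintype n] [DecidableEq n] [RCLike 𝕜]
    {A : Matrix n n 𝕜} (hA : PosSemidef A) {B : Matrix n n 𝕜} (hB : PosSemidef B)
    (hAB : A ^ 2 = B) : A = hB.sqrt := by
  have key : hB.sqrt = CFC.sqrt B := by
    rw [CFC.sqrt_eq_cfc, cfc_nnreal_eq_real _ B, hB.1.cfc_eq]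
    simp only [IsHermitian.cfc, Unitary.conjStarAlgAut_apply, Matrix.PosSemidef.sqrt]
    congr 3
    funext i
    simp [Real.coe_toNNReal', Real.coe_sqrt]
    rw [max_eq_left (hB.eigenvalues_nonneg i)]
  rw [key]
  exact (CFC.sqrt_unique (by rw [← hAB, sq]) hA.nonneg).symm

section Aux

variable {d : ℕ}

lemma re_star_mul (z : ℂ) : (star z * z).re = ‖z‖ ^ 2 := by
  rw [Complex.star_def, ← Complex.normSq_eq_conj_mul_self, Complex.ofReal_re,
    Complex.normSq_eq_norm_sq]

/-- squared euclidean norm of a vector -/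
noncomputable def sq2 (v : Fin d → ℂ) : ℝ := ∑ i, ‖v i‖ ^ 2

lemma sq2_nonneg (v : Fin d → ℂ) : 0 ≤ sq2 v :=
  Finset.sum_nonneg fun _ _ => sq_nonneg _

lemma sq2_eq_re (v : Fin d → ℂ) : sq2 v = (star v ⬝ᵥ v).re := by
  simp only [sq2, dotProduct, Pi.star_apply, Complex.re_sum]
  exact Finset.sum_congr rfl fun i _ => (re_star_mul (v i)).symm

lemma dot_conj_comm (v w : Fin d → ℂ) :
    star w ⬝ᵥ v = starRingEnd ℂ (star v ⬝ᵥ w) := by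
  simp only [dotProduct, map_sum, Pi.star_apply, Complex.star_def]
  refine Finset.sum_congr rfl fun i _ => ?_
  rw [RingHom.map_mul, Complex.conj_conj, mul_comm]

/-- Pythagoras for orthogonal vectors. -/
lemma sq2_add_of_orth (a b : Fin d → ℂ) (h : star a ⬝ᵥ b = 0) :
    sq2 (a + b) = sq2 a + sq2 b := by
  have h' : star b ⬝ᵥ a = 0 := by rw [dot_conj_comm, h, map_zero]
  rw [sq2_eq_re, sq2_eq_re, sq2_eq_re, star_add, add_dotProduct, dotProduct_add,
    dotProduct_add, h, h']
  simp

lemma sq2_unitary (u : Matrix (Fin d) (Fin d) ℂ) (hu : star u * u = 1)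
    (z : Fin d → ℂ) : sq2 (u *ᵥ z) = sq2 z := by
  rw [sq2_eq_re, sq2_eq_re, star_mulVec, dotProduct_mulVec, vecMul_vecMul,
    ← Matrix.star_eq_conjTranspose, hu, vecMul_one]

/-- Cauchy–Schwarz for the dot product. -/
lemma dot_cs (v w : Fin d → ℂ) :
    ‖star v ⬝ᵥ w‖ ≤ Real.sqrt (sq2 v) * Real.sqrt (sq2 w) := by
  have h1 : ‖star v ⬝ᵥ w‖ ≤ ∑ i, ‖v i‖ * ‖w i‖ := by
    refine (norm_sum_le _ _).trans ?_
    refine Finset.sum_le_sum fun i _ => ?_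
    simp [Pi.star_apply, norm_mul]
  refine h1.trans ?_
  have h2 : (∑ i, ‖v i‖ * ‖w i‖) ^ 2 ≤ (∑ i, ‖v i‖ ^ 2) * ∑ i, ‖w i‖ ^ 2 :=
    Finset.sum_mul_sq_le_sq_mul_sq _ _ _
  have h3 : 0 ≤ ∑ i, ‖v i‖ * ‖w i‖ :=
    Finset.sum_nonneg fun i _ => mul_nonneg (norm_nonneg _) (norm_nonneg _)
  calc (∑ i, ‖v i‖ * ‖w i‖) = Real.sqrt (((∑ i, ‖v i‖ * ‖w i‖)) ^ 2) := by
        rw [Real.sqrt_sq h3]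
    _ ≤ Real.sqrt ((∑ i, ‖v i‖ ^ 2) * ∑ i, ‖w i‖ ^ 2) := Real.sqrt_le_sqrt h2
    _ = Real.sqrt (sq2 v) * Real.sqrt (sq2 w) := by
        rw [show (∑ i, ‖v i‖ ^ 2) = sq2 v from rfl, show (∑ i, ‖w i‖ ^ 2) = sq2 w from rfl,
          Real.sqrt_mul (sq2_nonneg v)]

lemma frobNorm_nonneg (A : Matrix (Fin d) (Fin d) ℂ) : 0 ≤ frobNorm A :=
  Real.sqrt_nonneg _

lemma frobNorm_eq_zero {A : Matrix (Fin d) (Fin d) ℂ} (h : frobNorm A ≤ 0) : A = 0 := by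
  have hnn : 0 ≤ ∑ i, ∑ j, ‖A i j‖ ^ 2 :=
    Finset.sum_nonneg fun i _ => Finset.sum_nonneg fun j _ => sq_nonneg _
  have h0 : (∑ i, ∑ j, ‖A i j‖ ^ 2) = 0 := by
    by_contra hne
    have hpos : 0 < ∑ i, ∑ j, ‖A i j‖ ^ 2 := lt_of_le_of_ne hnn (Ne.symm hne)
    have := Real.sqrt_pos.mpr hpos
    rw [frobNorm] at h; linarith
  ext i j
  have hij := (Finset.sum_eq_zero_iff_of_nonneg (fun i (_ : i ∈ Finset.univ) =>
    Finset.sum_nonneg fun j _ => sq_nonneg ‖A i j‖)).mp h0 i (Finset.mem_univ i)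
  have hj := (Finset.sum_eq_zero_iff_of_nonneg (fun j (_ : j ∈ Finset.univ) =>
    sq_nonneg ‖A i j‖)).mp hij j (Finset.mem_univ j)
  have : ‖A i j‖ = 0 := by
    have := sq_eq_zero_iff.mp hj; exact this
  simpa using norm_eq_zero.mp this

lemma trace_eq_sum_prod (A B : Matrix (Fin d) (Fin d) ℂ) :
    (A * B).trace = ∑ p : Fin d × Fin d, A p.1 p.2 * B p.2 p.1 := by
  calc (A * B).trace = ∑ i, ∑ j, A i j * B j i := by
        simp [Matrix.trace, Matrix.diag, Matrix.mul_apply]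
    _ = ∑ p : Fin d × Fin d, A p.1 p.2 * B p.2 p.1 := by
        rw [Fintype.sum_prod_type]

/-- Cauchy–Schwarz for the trace pairing. -/
lemma trace_cs (A B : Matrix (Fin d) (Fin d) ℂ) :
    ‖(A * B).trace‖ ≤ frobNorm A * frobNorm B := by
  rw [trace_eq_sum_prod]
  have h1 : ‖∑ p : Fin d × Fin d, A p.1 p.2 * B p.2 p.1‖
      ≤ ∑ p : Fin d × Fin d, ‖A p.1 p.2‖ * ‖B p.2 p.1‖ := by
    refine (norm_sum_le _ _).trans ?_
    exact Finset.sum_le_sum fun p _ => by rw [norm_mul]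
  refine h1.trans ?_
  have h2 : (∑ p : Fin d × Fin d, ‖A p.1 p.2‖ * ‖B p.2 p.1‖) ^ 2
      ≤ (∑ p : Fin d × Fin d, ‖A p.1 p.2‖ ^ 2) * ∑ p : Fin d × Fin d, ‖B p.2 p.1‖ ^ 2 :=
    Finset.sum_mul_sq_le_sq_mul_sq _ _ _
  have h3 : 0 ≤ ∑ p : Fin d × Fin d, ‖A p.1 p.2‖ * ‖B p.2 p.1‖ :=
    Finset.sum_nonneg fun p _ => mul_nonneg (norm_nonneg _) (norm_nonneg _)
  have hA : ∑ p : Fin d × Fin d, ‖A p.1 p.2‖ ^ 2 = ∑ i, ∑ j, ‖A i j‖ ^ 2 := by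
    rw [Fintype.sum_prod_type]
  have hB : ∑ p : Fin d × Fin d, ‖B p.2 p.1‖ ^ 2 = ∑ i, ∑ j, ‖B i j‖ ^ 2 := by
    rw [Fintype.sum_prod_type]
    exact Finset.sum_comm
  calc (∑ p : Fin d × Fin d, ‖A p.1 p.2‖ * ‖B p.2 p.1‖)
      = Real.sqrt ((∑ p : Fin d × Fin d, ‖A p.1 p.2‖ * ‖B p.2 p.1‖) ^ 2) := by
        rw [Real.sqrt_sq h3]
    _ ≤ Real.sqrt ((∑ p : Fin d × Fin d, ‖A p.1 p.2‖ ^ 2) * ∑ p : Fin d × Fin d, ‖B p.2 p.1‖ ^ 2) := by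
        exact Real.sqrt_le_sqrt h2
    _ = frobNorm A * frobNorm B := by
        rw [Real.sqrt_mul (Finset.sum_nonneg fun p _ => sq_nonneg _), hA, hB]; rfl

lemma euclidean_norm_eq (w : Fin d → ℂ) :
    ‖(WithLp.equiv 2 (Fin d → ℂ)).symm w‖ = Real.sqrt (sq2 w) := by
  rw [EuclideanSpace.norm_eq]; rfl

/-- bound on mulVec by the operator norm, in terms of `sq2`. -/
lemma sq2_mulVec_le (A : Matrix (Fin d) (Fin d) ℂ) (v : Fin d → ℂ) :
    Real.sqrt (sq2 (A *ᵥ v)) ≤ opNorm A * Real.sqrt (sq2 v) := by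
  have := (LinearMap.toContinuousLinearMap (Matrix.toEuclideanLin A)).le_opNorm
    ((WithLp.equiv 2 (Fin d → ℂ)).symm v)
  rw [LinearMap.coe_toContinuousLinearMap', Matrix.toEuclideanLin_apply] at this
  rw [← euclidean_norm_eq, ← euclidean_norm_eq]; exact this

lemma opNorm_le_bound' (A : Matrix (Fin d) (Fin d) ℂ) (C : ℝ) (hC : 0 ≤ C)
    (h : ∀ v : Fin d → ℂ, Real.sqrt (sq2 (A *ᵥ v)) ≤ C * Real.sqrt (sq2 v)) :
    opNorm A ≤ C := by
  refine ContinuousLinearMap.opNorm_le_bound _ hC fun x => ?_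
  rw [LinearMap.coe_toContinuousLinearMap', Matrix.toEuclideanLin_apply]
  have := h x.ofLp
  rw [← euclidean_norm_eq, ← euclidean_norm_eq] at this
  exact this

end Aux

section Herm

variable {d : ℕ} {A : Matrix (Fin d) (Fin d) ℂ}

lemma trace_mul_diagonal (M : Matrix (Fin d) (Fin d) ℂ) (f : Fin d → ℂ) :
    (M * diagonal f).trace = ∑ i, f i * M i i := by
  rw [Matrix.trace]
  simp only [Matrix.diag, Matrix.mul_diagonal]
  exact Finset.sum_congr rfl fun i _ => mul_comm _ _

/-- trace of `W * (u * diagonal f * uᴴ)` -/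
lemma trace_mul_conj_diag (u W : Matrix (Fin d) (Fin d) ℂ) (f : Fin d → ℂ) :
    (W * (u * diagonal f * star u)).trace
      = ∑ i, f i * ((star u * W * u) i i) := by
  have e1 : W * (u * diagonal f * star u) = ((W * u) * diagonal f) * star u := by
    simp only [Matrix.mul_assoc]
  rw [e1, Matrix.trace_mul_comm]
  simp only [← Matrix.mul_assoc]
  rw [trace_mul_diagonal]

lemma conj_diag_mul_conj_diag (u : Matrix (Fin d) (Fin d) ℂ) (hu : star u * u = 1)
    (f g : Fin d → ℂ) :
    (u * diagonal f * star u) * (u * diagonal g * star u)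
      = u * diagonal (fun i => f i * g i) * star u := by
  have h1 : (u * diagonal f * star u) * (u * diagonal g * star u)
      = u * (diagonal f * ((star u * u) * (diagonal g * star u))) := by
    simp only [Matrix.mul_assoc]
  rw [h1, hu, Matrix.one_mul,
    show diagonal f * (diagonal g * star u) = diagonal (fun i => f i * g i) * star u by
      rw [← Matrix.mul_assoc, diagonal_mul_diagonal],
    ← Matrix.mul_assoc]

lemma trace_conj_diag (u : Matrix (Fin d) (Fin d) ℂ) (huu : star u * u = 1)
    (f : Fin d → ℂ) : (u * diagonal f * star u).trace = ∑ i, f i := by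
  rw [Matrix.trace_mul_comm, ← Matrix.mul_assoc, huu, Matrix.one_mul, Matrix.trace_diagonal]

lemma star_mul_self_eigen (hA : A.IsHermitian) :
    star (hA.eigenvectorUnitary : Matrix (Fin d) (Fin d) ℂ)
      * (hA.eigenvectorUnitary : Matrix (Fin d) (Fin d) ℂ) = 1 :=
  Matrix.mem_unitaryGroup_iff'.mp hA.eigenvectorUnitary.2

/-- the trace norm of a Hermitian matrix is the sum of the absolute values of the
eigenvalues. -/
lemma traceNorm_hermitian (hA : A.IsHermitian) :
    traceNorm A = ∑ i, |hA.eigenvalues i| := by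
  set u : Matrix (Fin d) (Fin d) ℂ := (hA.eigenvectorUnitary : Matrix (Fin d) (Fin d) ℂ)
    with hu_def
  have huu : star u * u = 1 := star_mul_self_eigen hA
  set B : Matrix (Fin d) (Fin d) ℂ :=
    u * diagonal (fun i => ((|hA.eigenvalues i| : ℝ) : ℂ)) * star u with hBdef
  have hBpsd : B.PosSemidef := by
    have hd : PosSemidef (diagonal (fun i => ((|hA.eigenvalues i| : ℝ) : ℂ))) := by
      refine Matrix.posSemidef_diagonal_iff.mpr fun i => ?_
      exact_mod_cast Complex.zero_le_real.mpr (abs_nonneg _)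
    have := hd.mul_mul_conjTranspose_same u
    rw [← Matrix.star_eq_conjTranspose] at this
    exact this
  have hB2 : B ^ 2 = Aᴴ * A := by
    have hAA : Aᴴ * A = u * diagonal (fun i => ((hA.eigenvalues i : ℂ)) * (hA.eigenvalues i : ℂ))
        * star u := by
      conv_lhs => rw [hA.eq, hA.spectral_theorem, Unitary.conjStarAlgAut_apply]
      rw [← hu_def]
      exact conj_diag_mul_conj_diag u huu _ _
    have key : (fun i => ((|hA.eigenvalues i| : ℝ) : ℂ) * ((|hA.eigenvalues i| : ℝ) : ℂ))
        = (fun i => ((hA.eigenvalues i : ℝ) : ℂ) * ((hA.eigenvalues i : ℝ) : ℂ)) := by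
      funext i
      rw [← Complex.ofReal_mul, ← Complex.ofReal_mul, ← abs_mul, abs_mul_self]
    rw [pow_two, hBdef, conj_diag_mul_conj_diag u huu, key, hAA]
  have hsq : B = (Matrix.posSemidef_conjTranspose_mul_self A).sqrt :=
    hBpsd.eq_sqrt_of_sq_eq _ hB2
  rw [traceNorm, ← hsq]
  have hOne : B = (1 : Matrix (Fin d) (Fin d) ℂ) * B := (Matrix.one_mul _).symm
  rw [hOne, hBdef, trace_mul_conj_diag u 1]
  simp only [Matrix.mul_one, Matrix.one_mul, huu]
  rw [Complex.re_sum]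
  refine Finset.sum_congr rfl fun i _ => ?_
  simp

/-- the trace norm of a PSD matrix is its trace. -/
lemma traceNorm_psd {ρ : Matrix (Fin d) (Fin d) ℂ} (hρ : ρ.PosSemidef) :
    traceNorm ρ = ρ.trace.re := by
  have h2 : ρ ^ 2 = ρᴴ * ρ := by rw [pow_two, hρ.1]
  have := hρ.eq_sqrt_of_sq_eq (Matrix.posSemidef_conjTranspose_mul_self ρ) h2
  rw [traceNorm, ← this]

/-- Hölder / duality: `Re tr (W A) ≤ ‖W‖ ‖A‖₁` for Hermitian A. -/
lemma re_trace_le_opNorm_mul_traceNorm (hA : A.IsHermitian)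
    (W : Matrix (Fin d) (Fin d) ℂ) :
    ((W * A).trace).re ≤ opNorm W * traceNorm A := by
  set u : Matrix (Fin d) (Fin d) ℂ := (hA.eigenvectorUnitary : Matrix (Fin d) (Fin d) ℂ)
    with hu_def
  have huu : star u * u = 1 := star_mul_self_eigen hA
  have hcol : ∀ i, sq2 (fun k => u k i) = 1 := by
    intro i
    have h1 : ((star u * u) i i).re = 1 := by rw [huu]; simp
    rw [Matrix.mul_apply, Complex.re_sum] at h1
    rw [sq2]
    rw [← h1]
    refine Finset.sum_congr rfl fun k _ => ?_
    rw [Matrix.star_apply, re_star_mul]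
  have hdiagbound : ∀ i, ‖(star u * W * u) i i‖ ≤ opNorm W := by
    intro i
    have heq : (star u * W * u) i i = star (fun k => u k i) ⬝ᵥ (W *ᵥ (fun k => u k i)) := by
      simp only [dotProduct, Matrix.mulVec, dotProduct, Matrix.mul_apply, Matrix.star_apply,
        Pi.star_apply, Finset.sum_mul, Finset.mul_sum]
      rw [Finset.sum_comm]
      exact Finset.sum_congr rfl fun j _ => Finset.sum_congr rfl fun k _ => by ring
    rw [heq]
    refine (dot_cs _ _).trans ?_
    have h1 := sq2_mulVec_le W (fun k => u k i)
    have h2 : Real.sqrt (sq2 fun k => u k i) = 1 := by rw [hcol i, Real.sqrt_one]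
    rw [h2] at h1 ⊢
    rw [one_mul]
    rw [mul_one] at h1
    exact h1
  conv_lhs => rw [hA.spectral_theorem, Unitary.conjStarAlgAut_apply]
  rw [← hu_def, trace_mul_conj_diag, Complex.re_sum, traceNorm_hermitian hA, Finset.mul_sum]
  refine Finset.sum_le_sum fun i _ => ?_
  have hstep : ((RCLike.ofReal ∘ hA.eigenvalues) i * (star u * W * u) i i).re
      ≤ |hA.eigenvalues i| * ‖(star u * W * u) i i‖ := by
    calc ((RCLike.ofReal ∘ hA.eigenvalues) i * (star u * W * u) i i).re
        ≤ ‖(RCLike.ofReal ∘ hA.eigenvalues) i * (star u * W * u) i i‖ :=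
          Complex.re_le_norm _
      _ = |hA.eigenvalues i| * ‖(star u * W * u) i i‖ := by
          rw [norm_mul]
          congr 1
          simp [Function.comp, Complex.norm_real]
  refine hstep.trans ?_
  rw [mul_comm (opNorm W)]
  exact mul_le_mul_of_nonneg_left (hdiagbound i) (abs_nonneg _)

lemma traceNorm_nonneg' (hA : A.IsHermitian) : 0 ≤ traceNorm A := by
  rw [traceNorm_hermitian hA]; exact Finset.sum_nonneg fun i _ => abs_nonneg _

/-- `frobNorm ≤ traceNorm` for Hermitian matrices. -/
lemma frobNorm_le_traceNorm (hA : A.IsHermitian) :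
    frobNorm A ≤ traceNorm A := by
  set u : Matrix (Fin d) (Fin d) ℂ := (hA.eigenvectorUnitary : Matrix (Fin d) (Fin d) ℂ)
    with hu_def
  have huu : star u * u = 1 := star_mul_self_eigen hA
  have hfrob : (frobNorm A) ^ 2 = ((Aᴴ * A).trace).re := by
    rw [frobNorm, Real.sq_sqrt (Finset.sum_nonneg fun i _ =>
      Finset.sum_nonneg fun j _ => sq_nonneg _)]
    rw [Matrix.trace, Complex.re_sum]
    rw [Finset.sum_comm]
    refine Finset.sum_congr rfl fun j _ => ?_
    rw [Matrix.diag, Matrix.mul_apply, Complex.re_sum]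
    refine Finset.sum_congr rfl fun i _ => ?_
    rw [Matrix.conjTranspose_apply, re_star_mul]
  have htr : ((Aᴴ * A).trace).re = ∑ i, (hA.eigenvalues i) ^ 2 := by
    have hAA : Aᴴ * A = u * diagonal (fun i => ((hA.eigenvalues i : ℂ)) * (hA.eigenvalues i : ℂ))
        * star u := by
      conv_lhs => rw [hA.eq, hA.spectral_theorem, Unitary.conjStarAlgAut_apply]
      rw [← hu_def]
      exact conj_diag_mul_conj_diag u huu _ _
    rw [hAA]
    have h1 : u * diagonal (fun i => ((hA.eigenvalues i : ℂ)) * (hA.eigenvalues i : ℂ)) * star u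
        = (1 : Matrix (Fin d) (Fin d) ℂ) *
          (u * diagonal (fun i => ((hA.eigenvalues i : ℂ)) * (hA.eigenvalues i : ℂ)) * star u) :=
      (Matrix.one_mul _).symm
    rw [h1, trace_mul_conj_diag u 1, Complex.re_sum]
    refine Finset.sum_congr rfl fun i _ => ?_
    rw [Matrix.mul_one, huu]
    simp [sq]
  have h2 : (frobNorm A) ^ 2 ≤ (traceNorm A) ^ 2 := by
    rw [hfrob, htr, traceNorm_hermitian hA]
    have hx : ∑ i, (hA.eigenvalues i) ^ 2 = ∑ i, |hA.eigenvalues i| ^ 2 :=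
      Finset.sum_congr rfl fun i _ => (sq_abs _).symm
    rw [hx]
    exact Finset.sum_sq_le_sq_sum_of_nonneg fun i _ => abs_nonneg _
  have hfn : 0 ≤ frobNorm A := frobNorm_nonneg A
  have htn : 0 ≤ traceNorm A := traceNorm_nonneg' hA
  nlinarith

lemma traceNorm_pos (hA : A.IsHermitian) (hne : A ≠ 0) : 0 < traceNorm A := by
  rw [traceNorm_hermitian hA]
  rcases (Finset.sum_nonneg (fun i (_ : i ∈ Finset.univ) =>
    abs_nonneg (hA.eigenvalues i))).lt_or_eq with h | h
  · exact h
  · exfalso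
    apply hne
    have hzero : ∀ i, hA.eigenvalues i = 0 := by
      intro i
      have := (Finset.sum_eq_zero_iff_of_nonneg fun i _ => abs_nonneg (hA.eigenvalues i)).mp
        h.symm i (Finset.mem_univ i)
      exact abs_eq_zero.mp this
    have hsp := hA.spectral_theorem
    rw [hsp]
    have hdz : diagonal (RCLike.ofReal ∘ hA.eigenvalues) = (0 : Matrix (Fin d) (Fin d) ℂ) := by
      ext i j
      simp [Matrix.diagonal_apply, hzero]
    rw [hdz, map_zero]

end Herm

theorem traceNorm_strict_increase {d : ℕ} (ρ E Δ Y : Matrix (Fin d) (Fin d) ℂ)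
    (hρ : ρ.PosSemidef)
    (hE : E.IsHermitian) (hE2 : E * E = E)
    (hEρ : E * ρ = ρ) (hρE : ρ * E = ρ) (hrank : E.rank = ρ.rank)
    (hΔ : Δ.IsHermitian) (hΔne : Δ ≠ 0)
    (hcase : frobNorm (PT E Δ) ≤ (d : ℝ) ^ 2 * frobNorm (PTperp E Δ))
    (hY : Y.IsHermitian)
    (hYΔ : (Y * Δ).trace = 0)
    (hY1 : frobNorm (PT E Y - E) ≤ 1 / (2 * (d : ℝ) ^ 2))
    (hY2 : opNorm (PTperp E Y) < 1 / 2) :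
    traceNorm ρ < traceNorm (ρ + Δ) := by
  -- trivial dimension
  rcases Nat.eq_zero_or_pos d with hd0 | hdpos
  · subst hd0
    exact absurd (Subsingleton.elim Δ 0) hΔne
  have hd2 : (0 : ℝ) < (d : ℝ) ^ 2 := by positivity
  -- notation
  set F : Matrix (Fin d) (Fin d) ℂ := 1 - E with hF
  have hFherm : Fᴴ = F := by
    rw [hF, Matrix.conjTranspose_sub, Matrix.conjTranspose_one, hE.eq]
  have hF2 : F * F = F := by
    rw [hF, Matrix.sub_mul, Matrix.one_mul, Matrix.mul_sub, Matrix.mul_one, hE2]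
    abel
  have hEF : E * F = 0 := by rw [hF, Matrix.mul_sub, Matrix.mul_one, hE2, sub_self]
  have hFE : F * E = 0 := by rw [hF, Matrix.sub_mul, Matrix.one_mul, hE2, sub_self]
  set Δp : Matrix (Fin d) (Fin d) ℂ := PTperp E Δ with hΔpdef
  have hΔp : Δp = F * Δ * F := rfl
  set ΔT : Matrix (Fin d) (Fin d) ℂ := PT E Δ with hΔTdef
  have hΔT : ΔT = Δ - Δp := rfl
  set Yp : Matrix (Fin d) (Fin d) ℂ := PTperp E Y with hYpdef
  have hYp : Yp = F * Y * F := rfl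
  set YT : Matrix (Fin d) (Fin d) ℂ := PT E Y with hYTdef
  have hYT : YT = Y - Yp := rfl
  have hΔp_herm : Δp.IsHermitian := by
    show Δpᴴ = Δp
    rw [hΔp, Matrix.conjTranspose_mul, Matrix.conjTranspose_mul, hFherm, hΔ.eq,
      Matrix.mul_assoc]
  -- the degenerate case Δp = 0
  by_cases hΔp0 : Δp = 0
  · exfalso
    apply hΔne
    have h1 : frobNorm (PTperp E Δ) = 0 := by
      rw [← hΔpdef, hΔp0]
      have : ∀ i j, ‖(0 : Matrix (Fin d) (Fin d) ℂ) i j‖ ^ 2 = 0 := by intro i j; simp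
      simp [frobNorm]
    rw [h1, mul_zero] at hcase
    have h2 : ΔT = 0 := frobNorm_eq_zero hcase
    have := hΔT
    rw [h2, hΔp0] at this
    simpa using this.symm
  -- Δp ≠ 0 : build the sign matrix S
  have hρh : ρ.IsHermitian := hρ.1
  set t : ℝ := traceNorm Δp with ht
  have ht_pos : 0 < t := traceNorm_pos hΔp_herm hΔp0
  set u : Matrix (Fin d) (Fin d) ℂ := (hΔp_herm.eigenvectorUnitary : Matrix (Fin d) (Fin d) ℂ)
    with hu_def
  have huu : star u * u = 1 := star_mul_self_eigen hΔp_herm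
  have huu' : u * star u = 1 := Matrix.mem_unitaryGroup_iff.mp hΔp_herm.eigenvectorUnitary.2
  set lam : Fin d → ℝ := hΔp_herm.eigenvalues with hlam
  set s : Fin d → ℂ := fun i => ((Real.sign (lam i) : ℝ) : ℂ) with hs
  set S : Matrix (Fin d) (Fin d) ℂ := u * diagonal s * star u with hS
  have hspec : Δp = u * diagonal (RCLike.ofReal ∘ lam) * star u := by
    conv_lhs => rw [hΔp_herm.spectral_theorem, Unitary.conjStarAlgAut_apply]
  have hsign_mul : ∀ i, s i * ((lam i : ℝ) : ℂ) = ((|lam i| : ℝ) : ℂ) := by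
    intro i
    rcases lt_trichotomy (lam i) 0 with h | h | h
    · rw [hs]; simp only []
      rw [Real.sign_of_neg h, abs_of_neg h]
      push_cast; ring
    · rw [hs]; simp only []
      rw [h, Real.sign_zero, abs_zero]
      push_cast; ring
    · rw [hs]; simp only []
      rw [Real.sign_of_pos h, abs_of_pos h]
      push_cast; ring
  -- trace of S * Δp equals t
  have htSΔp : (S * Δp).trace = ((t : ℝ) : ℂ) := by
    rw [hS, hspec, conj_diag_mul_conj_diag u huu, trace_conj_diag u huu]
    rw [ht, traceNorm_hermitian hΔp_herm]
    push_cast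
    exact Finset.sum_congr rfl fun i _ => hsign_mul i
  -- S is supported on range F
  set g : Fin d → ℂ := fun i => if lam i = 0 then 0 else s i / ((lam i : ℝ) : ℂ) with hg
  set M : Matrix (Fin d) (Fin d) ℂ := u * diagonal g * star u with hM
  have hlg : ∀ i, (RCLike.ofReal ∘ lam) i * g i = s i := by
    intro i
    by_cases h : lam i = 0
    · rw [hg]; simp only [h, if_pos rfl]
      rw [hs]; simp [h, Real.sign_zero]
    · have hne : ((lam i : ℝ) : ℂ) ≠ 0 := Complex.ofReal_ne_zero.mpr h
      rw [hg]; simp only [if_neg h]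
      field_simp
      exact mul_comm _ _
  have hgl : ∀ i, g i * (RCLike.ofReal ∘ lam) i = s i := fun i => by
    rw [mul_comm]; exact hlg i
  have hSMl : Δp * M = S := by
    rw [hspec, hM, conj_diag_mul_conj_diag u huu, hS]
    congr 1
    congr 1
    exact congrArg _ (funext hlg)
  have hSMr : M * Δp = S := by
    rw [hspec, hM, conj_diag_mul_conj_diag u huu, hS]
    congr 1
    congr 1
    exact congrArg _ (funext hgl)
  have hFΔp : F * Δp = Δp := by
    rw [hΔp]
    calc F * (F * Δ * F) = (F * F) * Δ * F := by simp only [Matrix.mul_assoc]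
      _ = F * Δ * F := by rw [hF2]
  have hΔpF : Δp * F = Δp := by
    rw [hΔp]
    calc (F * Δ * F) * F = F * Δ * (F * F) := by simp only [Matrix.mul_assoc]
      _ = F * Δ * F := by rw [hF2]
  have hFS : F * S = S := by
    rw [← hSMl, ← Matrix.mul_assoc F Δp M, hFΔp]
  have hSF : S * F = S := by
    rw [← hSMr, Matrix.mul_assoc M Δp F, hΔpF]
  have hES : E * S = 0 := by
    rw [← hFS, ← Matrix.mul_assoc, hEF, Matrix.zero_mul]
  -- norm bound for S
  have hs_bound : ∀ i, ‖s i‖ ≤ 1 := by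
    intro i
    rw [hs]
    simp only [Complex.norm_real, Real.norm_eq_abs]
    rcases lt_trichotomy (lam i) 0 with h | h | h
    · rw [Real.sign_of_neg h]; simp
    · rw [h, Real.sign_zero]; simp
    · rw [Real.sign_of_pos h]; simp
  have hsq2S : ∀ v : Fin d → ℂ, sq2 (S *ᵥ v) ≤ sq2 v := by
    intro v
    have e1 : S *ᵥ v = u *ᵥ (diagonal s *ᵥ (star u *ᵥ v)) := by
      rw [Matrix.mulVec_mulVec, Matrix.mulVec_mulVec, hS]
    rw [e1, sq2_unitary u huu]
    have e2 : sq2 (diagonal s *ᵥ (star u *ᵥ v)) ≤ sq2 (star u *ᵥ v) := by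
      rw [sq2, sq2]
      refine Finset.sum_le_sum fun i _ => ?_
      rw [Matrix.mulVec_diagonal, norm_mul, mul_pow]
      have hb := hs_bound i
      have h1 : ‖s i‖ ^ 2 ≤ 1 := by nlinarith [norm_nonneg (s i)]
      calc ‖s i‖ ^ 2 * ‖(star u *ᵥ v) i‖ ^ 2 ≤ 1 * ‖(star u *ᵥ v) i‖ ^ 2 :=
            mul_le_mul_of_nonneg_right h1 (sq_nonneg _)
        _ = ‖(star u *ᵥ v) i‖ ^ 2 := one_mul _
    refine e2.trans ?_
    have : sq2 (star u *ᵥ v) = sq2 v :=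
      sq2_unitary (star u) (by rw [star_star]; exact huu') v
    rw [this]
  -- orthogonality of ranges of E and F/S
  have horthES : ∀ v : Fin d → ℂ, star (E *ᵥ v) ⬝ᵥ (S *ᵥ v) = 0 := by
    intro v
    rw [Matrix.star_mulVec, Matrix.dotProduct_mulVec, Matrix.vecMul_vecMul, hE.eq, hES]
    simp
  have horthEF : ∀ v : Fin d → ℂ, star (E *ᵥ v) ⬝ᵥ (F *ᵥ v) = 0 := by
    intro v
    rw [Matrix.star_mulVec, Matrix.dotProduct_mulVec, Matrix.vecMul_vecMul, hE.eq, hEF]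
    simp
  -- operator norm of W := E + S is at most 1
  set W : Matrix (Fin d) (Fin d) ℂ := E + S with hW
  have hWnorm : opNorm W ≤ 1 := by
    refine opNorm_le_bound' W 1 zero_le_one fun v => ?_
    rw [one_mul]
    refine Real.sqrt_le_sqrt ?_
    have e1 : W *ᵥ v = E *ᵥ v + S *ᵥ v := by rw [hW, Matrix.add_mulVec]
    have e2 : sq2 (W *ᵥ v) = sq2 (E *ᵥ v) + sq2 (S *ᵥ v) := by
      rw [e1, sq2_add_of_orth _ _ (horthES v)]
    have e3 : v = E *ᵥ v + F *ᵥ v := by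
      rw [← Matrix.add_mulVec]
      rw [hF]
      simp
    have e4 : sq2 v = sq2 (E *ᵥ v) + sq2 (F *ᵥ v) := by
      conv_lhs => rw [e3]
      rw [sq2_add_of_orth _ _ (horthEF v)]
    have e5 : sq2 (S *ᵥ v) ≤ sq2 (F *ᵥ v) := by
      have : S *ᵥ v = S *ᵥ (F *ᵥ v) := by rw [Matrix.mulVec_mulVec, hSF]
      rw [this]
      exact hsq2S (F *ᵥ v)
    rw [e2, e4]
    linarith
  -- trace computations
  have hadd_herm : (ρ + Δ).IsHermitian := hρh.add hΔ
  -- trace of W(ρ+Δ)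
  have hSρ : S * ρ = 0 := by
    have hFρ : F * ρ = 0 := by
      rw [hF, Matrix.sub_mul, Matrix.one_mul, hEρ, sub_self]
    rw [← hSF, Matrix.mul_assoc, hFρ, Matrix.mul_zero]
  have htSΔ : (S * Δ).trace = ((t : ℝ) : ℂ) := by
    have e : S * Δp = (S * Δ) * F := by
      calc S * Δp = ((S * F) * Δ) * F := by rw [hΔp]; simp only [Matrix.mul_assoc]
        _ = (S * Δ) * F := by rw [hSF]
    have : (S * Δp).trace = (S * Δ).trace := by
      rw [e, Matrix.trace_mul_comm, ← Matrix.mul_assoc, hFS]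
    rw [← this, htSΔp]
  -- the key general trace identities
  have key1 : ∀ X Z : Matrix (Fin d) (Fin d) ℂ,
      (X * (F * Z * F)).trace = ((F * X * F) * Z).trace := by
    intro X Z
    have e : X * (F * Z * F) = ((X * F) * Z) * F := by simp only [Matrix.mul_assoc]
    rw [e, Matrix.trace_mul_comm]
    simp only [← Matrix.mul_assoc]
  have key2 : ((F * Y * F) * (F * Δ * F)).trace = ((F * Y * F) * Δ).trace := by
    have e : F * (F * Y * F) * F = F * Y * F := by
      have : F * (F * Y * F) * F = (F * F) * Y * (F * F) := by simp only [Matrix.mul_assoc]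
      rw [this, hF2]
    rw [key1 (F * Y * F) Δ, e]
  -- orthogonal decomposition of the trace pairing
  have hYT_Δp : (YT * Δp).trace = 0 := by
    rw [hYT, Matrix.sub_mul, Matrix.trace_sub]
    rw [hΔp, hYp, key1 Y Δ, key2]
    exact sub_self _
  have hYp_ΔT : (Yp * ΔT).trace = 0 := by
    rw [hΔT, Matrix.mul_sub, Matrix.trace_sub]
    rw [hΔp, hYp, key2]
    exact sub_self _
  have hsplit : (YT * ΔT).trace + (Yp * Δp).trace = 0 := by
    have e : Y * Δ = YT * ΔT + YT * Δp + (Yp * ΔT + Yp * Δp) := by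
      have : Y = YT + Yp := by rw [hYT]; abel
      rw [this, Matrix.add_mul]
      have : Δ = ΔT + Δp := by rw [hΔT]; abel
      rw [this, Matrix.mul_add, Matrix.mul_add]
    have := hYΔ
    rw [e, Matrix.trace_add, Matrix.trace_add, Matrix.trace_add, hYT_Δp, hYp_ΔT] at this
    linear_combination this
  -- trace of E * Δ
  have hEΔp : E * Δp = 0 := by
    rw [hΔp, ← Matrix.mul_assoc, ← Matrix.mul_assoc, hEF, Matrix.zero_mul, Matrix.zero_mul]
  have hEΔ : E * Δ = E * ΔT := by
    have : Δ = ΔT + Δp := by rw [hΔT]; abel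
    rw [this, Matrix.mul_add, hEΔp, add_zero]
  -- main estimate
  have hmain : ((W * (ρ + Δ)).trace).re
      = ρ.trace.re + ((E * ΔT).trace).re + t := by
    have e : W * (ρ + Δ) = E * ρ + S * ρ + (E * Δ + S * Δ) := by
      rw [hW, Matrix.add_mul, Matrix.mul_add, Matrix.mul_add]
      abel
    rw [e, Matrix.trace_add, Matrix.trace_add, Matrix.trace_add, hEρ, hSρ, hEΔ,
      Matrix.trace_zero, htSΔ]
    simp only [Complex.add_re, Complex.ofReal_re, Complex.zero_re]
    ring
  -- bound re tr(E ΔT)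
  have hbound1 : |(((YT - E) * ΔT).trace).re| ≤ frobNorm (YT - E) * frobNorm ΔT := by
    refine (Complex.abs_re_le_norm _).trans ?_
    exact trace_cs (YT - E) ΔT
  have hfrobprod : frobNorm (YT - E) * frobNorm ΔT ≤ frobNorm Δp / 2 := by
    have h1 : frobNorm ΔT ≤ (d : ℝ) ^ 2 * frobNorm Δp := hcase
    have h2 : frobNorm (YT - E) ≤ 1 / (2 * (d : ℝ) ^ 2) := hY1
    have h3 := frobNorm_nonneg (YT - E)
    have h4 := frobNorm_nonneg ΔT
    have h5 := frobNorm_nonneg Δp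
    calc frobNorm (YT - E) * frobNorm ΔT
        ≤ (1 / (2 * (d : ℝ) ^ 2)) * ((d : ℝ) ^ 2 * frobNorm Δp) := by
          exact mul_le_mul h2 h1 h4 (by positivity)
      _ = frobNorm Δp / 2 := by field_simp
  have hfrob_t : frobNorm Δp ≤ t := frobNorm_le_traceNorm hΔp_herm
  have hYpΔp : (((Yp) * Δp).trace).re < t / 2 := by
    have h1 := re_trace_le_opNorm_mul_traceNorm hΔp_herm Yp
    have h2 : opNorm Yp * traceNorm Δp < (1 / 2) * t := by
      rw [← ht]
      exact mul_lt_mul_of_pos_right hY2 ht_pos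
    have := h1.trans_lt h2
    linarith
  -- combine: re tr(E ΔT) = re tr((E - YT) ΔT) + re tr(YT ΔT)
  have hEdec : ((E * ΔT).trace).re
      = -(((YT - E) * ΔT).trace).re - ((Yp * Δp).trace).re := by
    have e : E * ΔT = -((YT - E) * ΔT) + YT * ΔT := by
      rw [Matrix.sub_mul]; abel
    rw [e, Matrix.trace_add, Matrix.trace_neg, Complex.add_re, Complex.neg_re]
    have e2 : ((YT * ΔT).trace).re = -(((Yp * Δp).trace).re) := by
      have := congrArg Complex.re hsplit
      rw [Complex.add_re] at this
      simp only [Complex.zero_re] at this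
      linarith
    rw [e2]
    ring
  -- final chain
  have hfinal : traceNorm (ρ + Δ) ≥ ((W * (ρ + Δ)).trace).re := by
    have h1 := re_trace_le_opNorm_mul_traceNorm hadd_herm W
    have h2 : opNorm W * traceNorm (ρ + Δ) ≤ 1 * traceNorm (ρ + Δ) :=
      mul_le_mul_of_nonneg_right hWnorm (traceNorm_nonneg' hadd_herm)
    rw [one_mul] at h2
    exact h1.trans h2
  have hρtr : traceNorm ρ = ρ.trace.re := traceNorm_psd hρ
  have habs := abs_le.mp hbound1
  calc traceNorm ρ = ρ.trace.re := hρtr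
    _ < ((W * (ρ + Δ)).trace).re := by
        rw [hmain, hEdec]
        have : -(((YT - E) * ΔT).trace).re ≥ -(frobNorm Δp / 2) := by
          have := habs.2.trans hfrobprod
          linarith
        linarith
    _ ≤ traceNorm (ρ + Δ) := hfinal
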